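/- Let g ≥ 2 be an integer base and let (a_n)_{n≥1} be a sequence of positive integers. Suppose that (i) m = o(∑_{n=1}^m L(a_n)) as m → ∞, (ii) m · max_{1≤n≤m} L(a_n) = O(∑_{n=1}^m L(a_n)) as m → ∞, and (iii) for every ε > 0 and every k ∈ ℕ, the number of n ≤ m for which a_n is not (ε,k)-normal to base g is o(m) as m → ∞. Then the infinite base-g digit sequence obtained by concatenating the strings \bar{a_1}, \bar{a_2}, \bar{a_3}, … is normal to base g. -/

import Mathlib

open Filter Asymptotics

/-- Number of (possibly overlapping) occurrences of the string `σ` as a contiguous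
substring of the string `w` (strings are lists of base-`g` digits). -/
def nu (w σ : List ℕ) : ℕ :=
  ((Finset.range w.length).filter (fun i => σ <+: w.drop i)).card

/-- The string of base-`g` digits of `a`, most significant digit first. -/
def digs (g a : ℕ) : List ℕ :=
  (Nat.digits g a).reverse

/-- `L(a) = ⌊log_g a⌋ + 1`, the number of base-`g` digits of `a ≥ 1`. -/
def Lg (g a : ℕ) : ℕ :=
  Nat.log g a + 1

/-- A positive integer `a` is `(ε,k)`-normal to base `g` if every string `σ` of `k`
base-`g` digits satisfies `|ν(a,σ)/L(a) − g^{−k}| ≤ ε`. -/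
def EKNormalInt (g : ℕ) (ε : ℝ) (k : ℕ) (a : ℕ) : Prop :=
  ∀ σ : List ℕ, σ.length = k → (∀ d ∈ σ, d < g) →
    |(nu (digs g a) σ : ℝ) / (Lg g a : ℝ) - 1 / (g : ℝ) ^ k| ≤ ε

/-- The `N`-th digit (indexed from `0`) of the infinite base-`g` digit sequence obtained by
concatenating the digit strings of `a 1`, `a 2`, `a 3`, …  (When `g ≥ 2` and each `a n ≥ 1`,
the first `N+1` blocks have total length `> N`, so the index is valid.) -/
def concatDigit (g : ℕ) (a : ℕ → ℕ) (N : ℕ) : ℕ :=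
  (((List.range (N + 1)).map (fun n => digs g (a (n + 1)))).flatten).getD N 0

/-- An infinite sequence `x` of base-`g` digits is normal to base `g` if for every nonempty
string `σ` of base-`g` digits, the frequency of occurrences of `σ` among the first `N` digits
tends to `g^{-|σ|}`. -/
def IsNormalSeq (g : ℕ) (x : ℕ → ℕ) : Prop :=
  ∀ σ : List ℕ, σ ≠ [] → (∀ d ∈ σ, d < g) →
    Tendsto (fun N : ℕ => (nu ((List.range N).map x) σ : ℝ) / (N : ℝ)) atTop
      (nhds (1 / (g : ℝ) ^ σ.length))

/-! ### Auxiliary lemmas about `nu` -/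

lemma nu_le_length (w σ : List ℕ) : nu w σ ≤ w.length := by
  classical
  exact (Finset.card_filter_le _ _).trans_eq (Finset.card_range _)

lemma nu_append_ge (u v σ : List ℕ) : nu u σ + nu v σ ≤ nu (u ++ v) σ := by
  classical
  unfold nu
  set A := (Finset.range u.length).filter (fun i => σ <+: u.drop i) with hA
  set B := ((Finset.range v.length).filter (fun i => σ <+: v.drop i)).image
      (fun i => u.length + i) with hB
  have hBcard : B.card = ((Finset.range v.length).filter (fun i => σ <+: v.drop i)).card :=
    Finset.card_image_of_injective _ (fun x y h => by omega)
  have hsub : A ∪ B ⊆ (Finset.range (u ++ v).length).filter (fun i => σ <+: (u ++ v).drop i) := by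
    intro i hi
    rcases Finset.mem_union.1 hi with hi | hi
    · simp only [hA, Finset.mem_filter, Finset.mem_range] at hi
      refine Finset.mem_filter.2 ⟨Finset.mem_range.2 ?_, ?_⟩
      · simp only [List.length_append]; omega
      · rw [List.drop_append_of_le_length hi.1.le]
        exact hi.2.trans (List.prefix_append _ _)
    · simp only [hB, Finset.mem_image, Finset.mem_filter, Finset.mem_range] at hi
      obtain ⟨j, ⟨hj, hpre⟩, rfl⟩ := hi
      refine Finset.mem_filter.2 ⟨Finset.mem_range.2 ?_, ?_⟩
      · simp only [List.length_append]; omega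
      · rw [List.drop_append, List.drop_eq_nil_of_le (by omega)]; simpa using hpre
  have hdisj : Disjoint A B := by
    rw [Finset.disjoint_left]
    intro i hiA hiB
    simp only [hA, Finset.mem_filter, Finset.mem_range] at hiA
    simp only [hB, Finset.mem_image] at hiB
    obtain ⟨j, _, rfl⟩ := hiB
    omega
  calc A.card + _ = A.card + B.card := by rw [hBcard]
    _ = (A ∪ B).card := (Finset.card_union_of_disjoint hdisj).symm
    _ ≤ _ := Finset.card_le_card hsub

lemma nu_append_le (u v σ : List ℕ) : nu (u ++ v) σ ≤ nu u σ + nu v σ + σ.length := by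
  classical
  unfold nu
  set A := (Finset.range u.length).filter (fun i => σ <+: u.drop i) with hA
  set B := ((Finset.range v.length).filter (fun i => σ <+: v.drop i)).image
      (fun i => u.length + i) with hB
  set E := Finset.Ico (u.length - σ.length) u.length with hE
  have hsub : (Finset.range (u ++ v).length).filter (fun i => σ <+: (u ++ v).drop i)
      ⊆ A ∪ B ∪ E := by
    intro i hi
    simp only [Finset.mem_filter, Finset.mem_range, List.length_append] at hi
    obtain ⟨hilt, hpre⟩ := hi
    by_cases hiu : u.length ≤ i
    · refine Finset.mem_union.2 (Or.inl (Finset.mem_union.2 (Or.inr ?_)))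
      refine Finset.mem_image.2 ⟨i - u.length, Finset.mem_filter.2 ⟨Finset.mem_range.2 (by omega), ?_⟩, by omega⟩
      have : (u ++ v).drop i = v.drop (i - u.length) := by
        conv_lhs => rw [show i = u.length + (i - u.length) by omega]
        rw [List.drop_append]; simp
      rwa [this] at hpre
    · push_neg at hiu
      by_cases hfit : σ.length ≤ u.length - i
      · refine Finset.mem_union.2 (Or.inl (Finset.mem_union.2 (Or.inl ?_)))
        refine Finset.mem_filter.2 ⟨Finset.mem_range.2 hiu, ?_⟩
        rw [List.drop_append_of_le_length hiu.le] at hpre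
        have hσ : σ = (u.drop i ++ v).take σ.length := by
          obtain ⟨t, ht⟩ := hpre
          rw [← ht, List.take_append_of_le_length (by simp), List.take_length]
        rw [List.take_append_of_le_length (by rw [List.length_drop]; omega)] at hσ
        rw [hσ]; exact List.take_prefix _ _
      · exact Finset.mem_union.2 (Or.inr (Finset.mem_Ico.2 ⟨by omega, hiu⟩))
  have h1 := Finset.card_le_card hsub
  have h2 := Finset.card_union_le (A ∪ B) E
  have h3 := Finset.card_union_le A B
  have hBcard : B.card ≤ ((Finset.range v.length).filter (fun i => σ <+: v.drop i)).card :=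
    Finset.card_image_le
  have hEcard : E.card ≤ σ.length := by
    rw [hE, Nat.card_Ico]; omega
  omega

lemma nu_prefix_mono (u w σ : List ℕ) (h : u <+: w) : nu u σ ≤ nu w σ := by
  obtain ⟨v, rfl⟩ := h
  have := nu_append_ge u v σ
  omega

/-! ### The concatenated word -/

section W
variable (g : ℕ) (a : ℕ → ℕ)

def Wl (m : ℕ) : List ℕ := ((List.range m).map (fun n => digs g (a (n + 1)))).flatten

lemma Wl_succ (m : ℕ) : Wl g a (m + 1) = Wl g a m ++ digs g (a (m + 1)) := by
  unfold Wl
  rw [List.range_succ, List.map_append, List.flatten_append]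
  simp

lemma Wl_prefix {m m' : ℕ} (h : m ≤ m') : Wl g a m <+: Wl g a m' := by
  induction m' with
  | zero => simp_all
  | succ n ih =>
    rcases Nat.eq_or_lt_of_le h with rfl | h'
    · exact List.prefix_refl _
    · exact (ih (by omega)).trans (by rw [Wl_succ]; exact List.prefix_append _ _)

lemma Wl_length (m : ℕ) :
    (Wl g a m).length = ∑ n ∈ Finset.range m, (digs g (a (n + 1))).length := by
  induction m with
  | zero => simp [Wl]
  | succ n ih => rw [Wl_succ, List.length_append, ih, Finset.sum_range_succ]

lemma nu_Wl_ge (σ : List ℕ) (m : ℕ) :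
    ∑ n ∈ Finset.range m, nu (digs g (a (n + 1))) σ ≤ nu (Wl g a m) σ := by
  induction m with
  | zero => simp
  | succ n ih =>
    rw [Wl_succ, Finset.sum_range_succ]
    calc _ ≤ nu (Wl g a n) σ + nu (digs g (a (n + 1))) σ := by omega
      _ ≤ _ := nu_append_ge _ _ _

lemma nu_Wl_le (σ : List ℕ) (m : ℕ) :
    nu (Wl g a m) σ ≤ (∑ n ∈ Finset.range m, nu (digs g (a (n + 1))) σ) + σ.length * m := by
  induction m with
  | zero => simp [Wl, nu]
  | succ n ih =>
    rw [Wl_succ, Finset.sum_range_succ, Nat.mul_succ]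
    have h := nu_append_le (Wl g a n) (digs g (a (n + 1))) σ
    omega

lemma digs_length (hg : 2 ≤ g) {b : ℕ} (hb : 1 ≤ b) : (digs g b).length = Lg g b := by
  unfold digs Lg
  rw [List.length_reverse, Nat.digits_len _ _ (by omega) (by omega)]

lemma Wl_length_ge (hg : 2 ≤ g) (ha : ∀ n, 1 ≤ n → 1 ≤ a n) (m : ℕ) : m ≤ (Wl g a m).length := by
  rw [Wl_length]
  calc m = ∑ _n ∈ Finset.range m, 1 := by simp
    _ ≤ _ := Finset.sum_le_sum (fun n _ => by
        rw [digs_length g hg (ha _ (by omega))]; unfold Lg; omega)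

lemma concatDigit_eq (hg : 2 ≤ g) (ha : ∀ n, 1 ≤ n → 1 ≤ a n) {N m : ℕ}
    (h : N < (Wl g a m).length) : concatDigit g a N = (Wl g a m).getD N 0 := by
  have h1 : N < (Wl g a (N + 1)).length := Wl_length_ge g a hg ha (N + 1)
  have hcd : concatDigit g a N = (Wl g a (N + 1)).getD N 0 := rfl
  rw [hcd]
  rcases le_total (N + 1) m with hm | hm
  · have hp := Wl_prefix g a hm
    rw [List.getD_eq_getElem _ _ h1, List.getD_eq_getElem _ _ h]
    exact (hp.getElem h1)
  · have hp := Wl_prefix g a hm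
    rw [List.getD_eq_getElem _ _ h1, List.getD_eq_getElem _ _ h]
    exact (hp.getElem h).symm

lemma range_map_concatDigit (hg : 2 ≤ g) (ha : ∀ n, 1 ≤ n → 1 ≤ a n) {N m : ℕ}
    (h : N ≤ (Wl g a m).length) :
    (List.range N).map (concatDigit g a) = (Wl g a m).take N := by
  apply List.ext_getElem
  · simp [List.length_take]; omega
  · intro i hi1 hi2
    simp only [List.getElem_map, List.getElem_range, List.getElem_take]
    have hilen : i < N := by simpa using hi1
    have hiW : i < (Wl g a m).length := by omega
    rw [concatDigit_eq g a hg ha hiW, List.getD_eq_getElem _ _ hiW]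

end W

/-! ### Sums over blocks -/

lemma sum_Icc_one {M : Type*} [AddCommMonoid M] (f : ℕ → M) (m : ℕ) :
    ∑ n ∈ Finset.Icc 1 m, f n = ∑ n ∈ Finset.range m, f (n + 1) := by
  rw [← Finset.Ico_add_one_right_eq_Icc, Finset.sum_Ico_eq_sum_range]
  simp [add_comm]

def SnatD (g : ℕ) (a : ℕ → ℕ) (m : ℕ) : ℕ := ∑ n ∈ Finset.Icc 1 m, Lg g (a n)

def MD (g : ℕ) (a : ℕ → ℕ) (m : ℕ) : ℕ := (Finset.Icc 1 m).sup (fun n => Lg g (a n))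

def PD (g : ℕ) (a : ℕ → ℕ) (σ : List ℕ) (m : ℕ) : ℕ :=
  ∑ n ∈ Finset.Icc 1 m, nu (digs g (a n)) σ

lemma SnatD_ge (g : ℕ) (a : ℕ → ℕ) (m : ℕ) : m ≤ SnatD g a m := by
  unfold SnatD
  have := Finset.card_nsmul_le_sum (Finset.Icc 1 m) (fun n => Lg g (a n)) 1
    (fun n _ => Nat.succ_le_succ (Nat.zero_le _))
  simpa [Nat.card_Icc] using this

lemma SnatD_mono (g : ℕ) (a : ℕ → ℕ) : Monotone (SnatD g a) := fun x y h =>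
  Finset.sum_le_sum_of_subset (Finset.Icc_subset_Icc_right h)

lemma lenWl (g : ℕ) (hg : 2 ≤ g) (a : ℕ → ℕ) (ha : ∀ n, 1 ≤ n → 1 ≤ a n) (m : ℕ) :
    (Wl g a m).length = SnatD g a m := by
  rw [Wl_length]
  unfold SnatD
  rw [sum_Icc_one (fun n => Lg g (a n)) m]
  exact Finset.sum_congr rfl fun n _ => digs_length g hg (ha _ (by omega))

lemma PD_le_nuW (g : ℕ) (a : ℕ → ℕ) (σ : List ℕ) (m : ℕ) :
    PD g a σ m ≤ nu (Wl g a m) σ := by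
  unfold PD
  rw [sum_Icc_one]
  exact nu_Wl_ge g a σ m

lemma nuW_le_PD (g : ℕ) (a : ℕ → ℕ) (σ : List ℕ) (m : ℕ) :
    nu (Wl g a m) σ ≤ PD g a σ m + σ.length * m := by
  unfold PD
  rw [sum_Icc_one]
  exact nu_Wl_le g a σ m

lemma SnatD_le_pred (g : ℕ) (a : ℕ → ℕ) {m : ℕ} (hm : 1 ≤ m) :
    SnatD g a m ≤ SnatD g a (m - 1) + MD g a m := by
  obtain ⟨m', rfl⟩ : ∃ m', m = m' + 1 := ⟨m - 1, by omega⟩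
  have h1 : SnatD g a (m' + 1) = SnatD g a m' + Lg g (a (m' + 1)) := by
    unfold SnatD
    rw [Finset.sum_Icc_succ_top (by omega)]
  have h2 : Lg g (a (m' + 1)) ≤ MD g a (m' + 1) := by
    unfold MD
    exact Finset.le_sup (f := fun n => Lg g (a n)) (Finset.mem_Icc.2 ⟨by omega, le_rfl⟩)
  simp only [Nat.add_sub_cancel]
  omega

lemma Lg_le_MD (g : ℕ) (a : ℕ → ℕ) {n m : ℕ} (h1 : 1 ≤ n) (h2 : n ≤ m) :
    Lg g (a n) ≤ MD g a m := by
  unfold MD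
  exact Finset.le_sup (f := fun n => Lg g (a n)) (Finset.mem_Icc.2 ⟨h1, h2⟩)

open scoped Classical in
lemma PD_upper (g : ℕ) (hg : 2 ≤ g) (a : ℕ → ℕ) (ha : ∀ n, 1 ≤ n → 1 ≤ a n)
    (σ : List ℕ) (hσg : ∀ d ∈ σ, d < g) (ε : ℝ) (hε : 0 < ε) (m : ℕ) :
    (PD g a σ m : ℝ) ≤ (1 / (g : ℝ) ^ σ.length + ε) * (SnatD g a m : ℝ)
      + (((Finset.Icc 1 m).filter fun n => ¬ EKNormalInt g ε σ.length (a n)).card : ℝ)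
        * (MD g a m : ℝ) := by
  have hgpow : (0:ℝ) < (g : ℝ) ^ σ.length := by positivity
  have key : ∀ n ∈ Finset.Icc 1 m, (nu (digs g (a n)) σ : ℝ) ≤
      (1 / (g : ℝ) ^ σ.length + ε) * (Lg g (a n) : ℝ)
      + (if EKNormalInt g ε σ.length (a n) then 0 else (MD g a m : ℝ)) := by
    intro n hn
    have hn1 : 1 ≤ n := (Finset.mem_Icc.1 hn).1
    have han := ha n hn1
    have hL1 : (1:ℝ) ≤ (Lg g (a n) : ℝ) := by
      exact_mod_cast (Nat.succ_le_succ (Nat.zero_le _) : 1 ≤ Lg g (a n))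
    have hLpos : (0:ℝ) < (Lg g (a n) : ℝ) := by linarith
    by_cases hEK : EKNormalInt g ε σ.length (a n)
    · rw [if_pos hEK]
      have h := (abs_le.1 (hEK σ rfl hσg)).2
      rw [sub_le_iff_le_add] at h
      have h2 := (div_le_iff₀ hLpos).1 h
      linarith
    · rw [if_neg hEK]
      have hν : (nu (digs g (a n)) σ : ℝ) ≤ (Lg g (a n) : ℝ) := by
        exact_mod_cast (nu_le_length _ σ).trans_eq (by rw [digs_length g hg han])
      have hLM : (Lg g (a n) : ℝ) ≤ (MD g a m : ℝ) := by
        exact_mod_cast Lg_le_MD g a hn1 (Finset.mem_Icc.1 hn).2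
      have hpos : 0 ≤ (1 / (g : ℝ) ^ σ.length + ε) * (Lg g (a n) : ℝ) := by positivity
      linarith
  calc (PD g a σ m : ℝ) = ∑ n ∈ Finset.Icc 1 m, (nu (digs g (a n)) σ : ℝ) := by
        unfold PD; push_cast; rfl
    _ ≤ ∑ n ∈ Finset.Icc 1 m, ((1 / (g : ℝ) ^ σ.length + ε) * (Lg g (a n) : ℝ)
          + (if EKNormalInt g ε σ.length (a n) then 0 else (MD g a m : ℝ))) :=
        Finset.sum_le_sum key
    _ = (1 / (g : ℝ) ^ σ.length + ε) * (SnatD g a m : ℝ)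
          + ∑ n ∈ Finset.Icc 1 m,
            (if EKNormalInt g ε σ.length (a n) then (0:ℝ) else (MD g a m : ℝ)) := by
        rw [Finset.sum_add_distrib, ← Finset.mul_sum]
        congr 1
        congr 1
        unfold SnatD; push_cast; rfl
    _ = _ := by
        congr 1
        have hswap : ∀ n, (if EKNormalInt g ε σ.length (a n) then (0:ℝ) else (MD g a m : ℝ))
            = (if ¬ EKNormalInt g ε σ.length (a n) then (MD g a m : ℝ) else 0) := by
          intro n; by_cases h : EKNormalInt g ε σ.length (a n) <;> simp [h]
        rw [Finset.sum_congr rfl (fun n _ => hswap n), ← Finset.sum_filter, Finset.sum_const]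
        simp [mul_comm]

open scoped Classical in
lemma PD_lower (g : ℕ) (hg : 2 ≤ g) (a : ℕ → ℕ) (ha : ∀ n, 1 ≤ n → 1 ≤ a n)
    (σ : List ℕ) (hσg : ∀ d ∈ σ, d < g) (ε : ℝ) (hε : 0 < ε) {m m' : ℕ} (hmm' : m ≤ m') :
    (1 / (g : ℝ) ^ σ.length - ε) * (SnatD g a m : ℝ)
      - (((Finset.Icc 1 m').filter fun n => ¬ EKNormalInt g ε σ.length (a n)).card : ℝ)
        * (MD g a m' : ℝ) ≤ (PD g a σ m : ℝ) := by
  have hgpow : (1:ℝ) ≤ (g : ℝ) ^ σ.length := by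
    apply one_le_pow₀
    exact_mod_cast (by omega : 1 ≤ g)
  have hc1 : 1 / (g : ℝ) ^ σ.length ≤ 1 := by
    rw [div_le_one (by positivity)]; exact hgpow
  have hM0 : (0:ℝ) ≤ (MD g a m' : ℝ) := by positivity
  have key : ∀ n ∈ Finset.Icc 1 m,
      (1 / (g : ℝ) ^ σ.length - ε) * (Lg g (a n) : ℝ)
        - (if ¬ EKNormalInt g ε σ.length (a n) then (MD g a m' : ℝ) else 0)
      ≤ (nu (digs g (a n)) σ : ℝ) := by
    intro n hn
    have hn1 : 1 ≤ n := (Finset.mem_Icc.1 hn).1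
    have han := ha n hn1
    have hL1 : (1:ℝ) ≤ (Lg g (a n) : ℝ) := by
      exact_mod_cast (Nat.succ_le_succ (Nat.zero_le _) : 1 ≤ Lg g (a n))
    have hLpos : (0:ℝ) < (Lg g (a n) : ℝ) := by linarith
    by_cases hEK : EKNormalInt g ε σ.length (a n)
    · rw [if_neg (not_not_intro hEK)]
      have h := (abs_le.1 (hEK σ rfl hσg)).1
      have h2 := (le_div_iff₀ hLpos).1 (by linarith : 1 / (g : ℝ) ^ σ.length - ε
        ≤ (nu (digs g (a n)) σ : ℝ) / (Lg g (a n) : ℝ))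
      linarith
    · rw [if_pos hEK]
      have hLM : (Lg g (a n) : ℝ) ≤ (MD g a m' : ℝ) := by
        exact_mod_cast Lg_le_MD g a hn1 ((Finset.mem_Icc.1 hn).2.trans hmm')
      have hν0 : (0:ℝ) ≤ (nu (digs g (a n)) σ : ℝ) := by positivity
      nlinarith
  have hsum := Finset.sum_le_sum key
  have hcast : ∑ n ∈ Finset.Icc 1 m, (nu (digs g (a n)) σ : ℝ) = (PD g a σ m : ℝ) := by
    unfold PD; push_cast; rfl
  have hsplit : ∑ n ∈ Finset.Icc 1 m,
      ((1 / (g : ℝ) ^ σ.length - ε) * (Lg g (a n) : ℝ)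
        - (if ¬ EKNormalInt g ε σ.length (a n) then (MD g a m' : ℝ) else 0))
      = (1 / (g : ℝ) ^ σ.length - ε) * (SnatD g a m : ℝ)
        - (((Finset.Icc 1 m).filter fun n => ¬ EKNormalInt g ε σ.length (a n)).card : ℝ)
          * (MD g a m' : ℝ) := by
    rw [Finset.sum_sub_distrib, ← Finset.mul_sum, ← Finset.sum_filter, Finset.sum_const]
    congr 1
    · congr 1
      unfold SnatD; push_cast; rfl
    · simp [mul_comm]
  have hcardmono : (((Finset.Icc 1 m).filter fun n => ¬ EKNormalInt g ε σ.length (a n)).card : ℝ)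
      ≤ (((Finset.Icc 1 m').filter fun n => ¬ EKNormalInt g ε σ.length (a n)).card : ℝ) := by
    exact_mod_cast Finset.card_le_card (Finset.filter_subset_filter _
      (Finset.Icc_subset_Icc_right hmm'))
  rw [hsplit, hcast] at hsum
  nlinarith

open scoped Classical in
theorem combinatorial_method (g : ℕ) (hg : 2 ≤ g) (a : ℕ → ℕ)
    (ha : ∀ n, 1 ≤ n → 1 ≤ a n)
    (h1 : (fun m : ℕ => (m : ℝ)) =o[atTop]
      (fun m : ℕ => ∑ n ∈ Finset.Icc 1 m, (Lg g (a n) : ℝ)))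
    (h2 : (fun m : ℕ => (m : ℝ) * (((Finset.Icc 1 m).sup fun n => Lg g (a n) : ℕ) : ℝ))
      =O[atTop] (fun m : ℕ => ∑ n ∈ Finset.Icc 1 m, (Lg g (a n) : ℝ)))
    (h3 : ∀ ε : ℝ, 0 < ε → ∀ k : ℕ,
      (fun m : ℕ =>
          (((Finset.Icc 1 m).filter fun n => ¬ EKNormalInt g ε k (a n)).card : ℝ))
        =o[atTop] (fun m : ℕ => (m : ℝ))) :
    IsNormalSeq g (concatDigit g a) := by
  intro σ hσne hσg
  have hScast : ∀ m : ℕ, ∑ n ∈ Finset.Icc 1 m, (Lg g (a n) : ℝ) = (SnatD g a m : ℝ) := by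
    intro m; unfold SnatD; push_cast; rfl
  have hk1 : 0 < σ.length := List.length_pos_iff.2 hσne
  have hkR : (1:ℝ) ≤ (σ.length : ℝ) := by exact_mod_cast hk1
  have hgpow : (1:ℝ) ≤ (g : ℝ) ^ σ.length := by
    apply one_le_pow₀
    exact_mod_cast (by omega : 1 ≤ g)
  have hc0 : (0:ℝ) ≤ 1 / (g : ℝ) ^ σ.length := by positivity
  have hc1 : 1 / (g : ℝ) ^ σ.length ≤ 1 := by
    rw [div_le_one (by positivity)]; exact hgpow
  rw [Metric.tendsto_nhds]
  intro ε hε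
  have hε8 : 0 < ε / 8 := by linarith
  -- constants from the hypotheses
  obtain ⟨C, hCpos, hOW⟩ := h2.exists_pos
  set C' : ℝ := max C 1 with hC'def
  have hC'1 : (1:ℝ) ≤ C' := le_max_right _ _
  have hC'pos : (0:ℝ) < C' := by linarith
  have hCC' : C ≤ C' := le_max_left _ _
  clear_value C'
  have hbig : ∀ᶠ m : ℕ in atTop, (m : ℝ) * (MD g a m : ℝ) ≤ C' * (SnatD g a m : ℝ) := by
    filter_upwards [hOW.bound] with m hm
    have hnl : ‖(m : ℝ) * (((Finset.Icc 1 m).sup fun n => Lg g (a n) : ℕ) : ℝ)‖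
        = (m : ℝ) * (MD g a m : ℝ) := by
      rw [Real.norm_eq_abs, abs_of_nonneg (by positivity)]; rfl
    have hnr : ‖∑ n ∈ Finset.Icc 1 m, (Lg g (a n) : ℝ)‖ = (SnatD g a m : ℝ) := by
      rw [Real.norm_eq_abs, abs_of_nonneg (Finset.sum_nonneg fun _ _ => by positivity), hScast]
    rw [hnl, hnr] at hm
    have hS0 : (0:ℝ) ≤ (SnatD g a m : ℝ) := by positivity
    calc (m : ℝ) * (MD g a m : ℝ) ≤ C * (SnatD g a m : ℝ) := hm
      _ ≤ C' * (SnatD g a m : ℝ) := mul_le_mul_of_nonneg_right hCC' hS0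
  have hδ2pos : (0:ℝ) < ε / (16 * (σ.length : ℝ)) := by positivity
  have hsmall1 : ∀ᶠ m : ℕ in atTop,
      (m : ℝ) ≤ ε / (16 * (σ.length : ℝ)) * (SnatD g a m : ℝ) := by
    filter_upwards [(isLittleO_iff.1 h1) hδ2pos] with m hm
    rw [Real.norm_natCast, Real.norm_eq_abs,
      abs_of_nonneg (Finset.sum_nonneg fun _ _ => by positivity), hScast] at hm
    exact hm
  have hδ1pos : (0:ℝ) < ε / (16 * C') := by positivity
  have hsmall3 : ∀ᶠ m : ℕ in atTop,
      (((Finset.Icc 1 m).filter fun n => ¬ EKNormalInt g (ε/8) σ.length (a n)).card : ℝ)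
        ≤ ε / (16 * C') * (m : ℝ) := by
    filter_upwards [(isLittleO_iff.1 (h3 (ε/8) hε8 σ.length)) hδ1pos] with m hm
    rw [Real.norm_natCast, Real.norm_natCast] at hm
    exact hm
  have hcastTop : Tendsto (fun m : ℕ => (m : ℝ)) atTop atTop := tendsto_natCast_atTop_atTop
  have hev1 : ∀ᶠ m : ℕ in atTop, 2 * C' ≤ (m : ℝ) := hcastTop.eventually_ge_atTop _
  have hev2 : ∀ᶠ m : ℕ in atTop, (1 + ε/8) * (2 * C') ≤ (ε/8) * (m : ℝ) := by
    filter_upwards [hcastTop.eventually_ge_atTop ((1 + ε/8) * (2 * C') / (ε/8))] with m hm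
    rw [div_le_iff₀ hε8] at hm
    linarith
  -- the block index function
  have hex : ∀ N : ℕ, ∃ m, N ≤ SnatD g a m := fun N => ⟨N, SnatD_ge g a N⟩
  have hmN_tendsto : Tendsto (fun N => Nat.find (hex N)) atTop atTop := by
    apply tendsto_atTop_atTop.2
    intro b
    refine ⟨SnatD g a b + 1, fun N hN => ?_⟩
    by_contra hlt
    push_neg at hlt
    have hmono := SnatD_mono g a (le_of_lt hlt)
    have hspec := Nat.find_spec (hex N)
    omega
  have hQ : ∀ᶠ m : ℕ in atTop,
      ((m : ℝ) * (MD g a m : ℝ) ≤ C' * (SnatD g a m : ℝ)) ∧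
      ((m : ℝ) ≤ ε / (16 * (σ.length : ℝ)) * (SnatD g a m : ℝ)) ∧
      ((((Finset.Icc 1 m).filter fun n => ¬ EKNormalInt g (ε/8) σ.length (a n)).card : ℝ)
        ≤ ε / (16 * C') * (m : ℝ)) ∧
      (2 * C' ≤ (m : ℝ)) ∧
      ((1 + ε/8) * (2 * C') ≤ (ε/8) * (m : ℝ)) :=
    hbig.and (hsmall1.and (hsmall3.and (hev1.and hev2)))
  filter_upwards [hmN_tendsto.eventually hQ, eventually_ge_atTop 1] with N hQN hN1
  obtain ⟨m, hfind, hmin, hQm⟩ :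
      ∃ m, N ≤ SnatD g a m ∧ (∀ m' < m, SnatD g a m' < N) ∧
      (((m : ℝ) * (MD g a m : ℝ) ≤ C' * (SnatD g a m : ℝ)) ∧
      ((m : ℝ) ≤ ε / (16 * (σ.length : ℝ)) * (SnatD g a m : ℝ)) ∧
      ((((Finset.Icc 1 m).filter fun n => ¬ EKNormalInt g (ε/8) σ.length (a n)).card : ℝ)
        ≤ ε / (16 * C') * (m : ℝ)) ∧
      (2 * C' ≤ (m : ℝ)) ∧
      ((1 + ε/8) * (2 * C') ≤ (ε/8) * (m : ℝ))) :=
    ⟨Nat.find (hex N), Nat.find_spec (hex N),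
      fun m' h => by have := Nat.find_min (hex N) h; omega, hQN⟩
  obtain ⟨qa, qc, qb, qd, qe⟩ := hQm
  have hmR2 : (2:ℝ) ≤ (m : ℝ) := by linarith only [qd, hC'1]
  have hm1 : 1 ≤ m := by exact_mod_cast (by linarith only [hmR2] : (1:ℝ) ≤ (m : ℝ))
  have hmRpos : (0:ℝ) < (m : ℝ) := by linarith only [hmR2]
  have hfind' : SnatD g a (m - 1) < N := hmin (m - 1) (by omega)
  -- Nat-level facts
  have hNW : N ≤ (Wl g a m).length := by rw [lenWl g hg a ha]; exact hfind
  have hrange : (List.range N).map (concatDigit g a) = (Wl g a m).take N :=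
    range_map_concatDigit g a hg ha hNW
  have f4 : nu ((List.range N).map (concatDigit g a)) σ ≤ PD g a σ m + σ.length * m := by
    rw [hrange]
    exact (nu_prefix_mono _ _ _ (List.take_prefix _ _)).trans (nuW_le_PD g a σ m)
  have f5 : PD g a σ (m - 1) ≤ nu ((List.range N).map (concatDigit g a)) σ := by
    rw [hrange]
    refine (PD_le_nuW g a σ (m - 1)).trans (nu_prefix_mono _ _ _ ?_)
    refine List.prefix_take_iff.2 ⟨Wl_prefix g a (by omega), ?_⟩
    rw [lenWl g hg a ha]
    omega
  have fS : SnatD g a m ≤ SnatD g a (m - 1) + MD g a m := SnatD_le_pred g a hm1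
  -- real abbreviations
  set Sm : ℝ := (SnatD g a m : ℝ) with hSm
  set S' : ℝ := (SnatD g a (m - 1) : ℝ) with hS'
  set Mr : ℝ := (MD g a m : ℝ) with hMr
  set Br : ℝ := (((Finset.Icc 1 m).filter
      fun n => ¬ EKNormalInt g (ε/8) σ.length (a n)).card : ℝ) with hBr
  set nr : ℝ := (N : ℝ) with hnr
  set vr : ℝ := (nu ((List.range N).map (concatDigit g a)) σ : ℝ) with hvr
  have hnr1 : (1:ℝ) ≤ nr := by rw [hnr]; exact_mod_cast hN1
  have hnrpos : (0:ℝ) < nr := by linarith only [hnr1]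
  have hMr0 : (0:ℝ) ≤ Mr := by rw [hMr]; positivity
  have hBr0 : (0:ℝ) ≤ Br := by rw [hBr]; positivity
  have rc1 : nr ≤ Sm := by rw [hnr, hSm]; exact_mod_cast hfind
  have rc2 : S' + 1 ≤ nr := by
    rw [hS', hnr]; exact_mod_cast hfind'
  have rc3 : Sm ≤ S' + Mr := by
    rw [hSm, hS', hMr]; exact_mod_cast fS
  have rSm : (m : ℝ) ≤ Sm := by rw [hSm]; exact_mod_cast SnatD_ge g a m
  -- real versions of the block-counting estimates
  have f6r : (PD g a σ m : ℝ) ≤ (1 / (g : ℝ) ^ σ.length + ε/8) * Sm + Br * Mr := by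
    rw [hSm, hBr, hMr]
    exact PD_upper g hg a ha σ hσg (ε/8) hε8 m
  have f7r : (1 / (g : ℝ) ^ σ.length - ε/8) * S' - Br * Mr ≤ (PD g a σ (m - 1) : ℝ) := by
    rw [hS', hBr, hMr]
    exact PD_lower g hg a ha σ hσg (ε/8) hε8 (by omega : m - 1 ≤ m)
  have f4r : vr ≤ (PD g a σ m : ℝ) + (σ.length : ℝ) * (m : ℝ) := by
    rw [hvr]; exact_mod_cast f4
  have f5r : (PD g a σ (m - 1) : ℝ) ≤ vr := by
    rw [hvr]; exact_mod_cast f5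
  clear_value Sm S' Mr Br nr vr
  clear hrange f4 f5 fS hfind hfind' hmin hNW hQN
  -- derived bounds
  have d_half : Mr ≤ Sm / 2 := by
    have h := mul_le_mul_of_nonneg_right qd hMr0
    have h2 : C' * (2 * Mr) ≤ C' * Sm := by linarith only [h, qa]
    have h3' := le_of_mul_le_mul_left h2 hC'pos
    linarith only [h3']
  have d_Sm2n : Sm ≤ 2 * nr := by linarith only [rc2, rc3, d_half]
  have d3 : (1 + ε/8) * Mr ≤ (ε/8) * nr := by
    have t1 : (1 + ε/8) * ((m : ℝ) * Mr) ≤ (1 + ε/8) * (C' * Sm) :=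
      mul_le_mul_of_nonneg_left qa (by linarith only [hε8])
    have t2 : (1 + ε/8) * (C' * Sm) ≤ (1 + ε/8) * (C' * (2 * nr)) := by
      apply mul_le_mul_of_nonneg_left _ (by linarith only [hε8])
      exact mul_le_mul_of_nonneg_left d_Sm2n (le_of_lt hC'pos)
    have t3 : ((1 + ε/8) * (2 * C')) * nr ≤ ((ε/8) * (m : ℝ)) * nr :=
      mul_le_mul_of_nonneg_right qe (by linarith only [hnrpos])
    have step : (m : ℝ) * ((1 + ε/8) * Mr) ≤ (m : ℝ) * ((ε/8) * nr) := by
      linarith only [t1, t2, t3]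
    exact le_of_mul_le_mul_left step hmRpos
  have d6 : Mr ≤ (ε/8) * nr := by
    have h : (0:ℝ) ≤ (ε/8) * Mr := mul_nonneg (le_of_lt hε8) hMr0
    linarith only [d3, h]
  have d4 : Br * Mr ≤ (ε/8) * nr := by
    have t1 : Br * Mr ≤ (ε / (16 * C') * (m : ℝ)) * Mr := mul_le_mul_of_nonneg_right qb hMr0
    have t2 : (ε / (16 * C')) * ((m : ℝ) * Mr) ≤ (ε / (16 * C')) * (C' * Sm) :=
      mul_le_mul_of_nonneg_left qa (by positivity)
    have t3 : (ε / (16 * C')) * (C' * Sm) = (ε / 16) * Sm := by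
      field_simp
    have t4 : (ε / 16) * Sm ≤ (ε / 16) * (2 * nr) :=
      mul_le_mul_of_nonneg_left d_Sm2n (by positivity)
    linarith only [t1, t2, t3, t4]
  have d5 : (σ.length : ℝ) * (m : ℝ) ≤ (ε/8) * nr := by
    have hkne : (σ.length : ℝ) ≠ 0 := by linarith only [hkR]
    have t1 : (σ.length : ℝ) * (m : ℝ)
        ≤ (σ.length : ℝ) * (ε / (16 * (σ.length : ℝ)) * Sm) :=
      mul_le_mul_of_nonneg_left qc (by linarith only [hkR])
    have t2 : (σ.length : ℝ) * (ε / (16 * (σ.length : ℝ)) * Sm) = (ε / 16) * Sm := by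
      field_simp
    have t3 : (ε / 16) * Sm ≤ (ε / 16) * (2 * nr) :=
      mul_le_mul_of_nonneg_left d_Sm2n (by positivity)
    linarith only [t1, t2, t3]
  -- main deviation bounds
  have hc_up : (1 / (g : ℝ) ^ σ.length) * Sm ≤ (1 / (g : ℝ) ^ σ.length) * nr + Mr := by
    rcases le_or_gt Sm nr with h | h
    · have h' := mul_le_mul_of_nonneg_left h hc0
      linarith only [h', hMr0]
    · have h2 : (1 / (g : ℝ) ^ σ.length) * (Sm - nr) ≤ 1 * (Sm - nr) :=
        mul_le_mul_of_nonneg_right hc1 (by linarith only [h])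
      have hSmnr : Sm - nr ≤ Mr := by linarith only [rc2, rc3]
      linarith only [h2, hSmnr]
  have hc_lo : (1 / (g : ℝ) ^ σ.length) * nr ≤ (1 / (g : ℝ) ^ σ.length) * S' + Mr := by
    have h2 : (1 / (g : ℝ) ^ σ.length) * (nr - S') ≤ 1 * (nr - S') :=
      mul_le_mul_of_nonneg_right hc1 (by linarith only [rc2])
    have h3' : nr - S' ≤ Mr := by linarith only [rc1, rc3]
    linarith only [h2, h3']
  have hεS : (ε/8) * Sm ≤ (ε/4) * nr := by
    have h := mul_le_mul_of_nonneg_left d_Sm2n (le_of_lt hε8)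
    linarith only [h]
  have hεS' : (ε/8) * S' ≤ (ε/8) * nr := by
    have h : S' ≤ nr := by linarith only [rc2]
    exact mul_le_mul_of_nonneg_left h (le_of_lt hε8)
  have hεnr0 : (0:ℝ) ≤ ε * nr := mul_nonneg (le_of_lt hε) (le_of_lt hnrpos)
  have up : vr ≤ (1 / (g : ℝ) ^ σ.length + (3/4) * ε) * nr := by
    linarith only [f4r, f6r, hc_up, hεS, d6, d4, d5, hεnr0]
  have lo : (1 / (g : ℝ) ^ σ.length - (3/4) * ε) * nr ≤ vr := by
    linarith only [f5r, f7r, hc_lo, hεS', d6, d4, hεnr0]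
  -- conclude
  have hup' : vr / nr ≤ 1 / (g : ℝ) ^ σ.length + (3/4) * ε := by
    rw [div_le_iff₀ hnrpos]
    linarith only [up]
  have hlo' : 1 / (g : ℝ) ^ σ.length - (3/4) * ε ≤ vr / nr := by
    rw [le_div_iff₀ hnrpos]
    linarith only [lo]
  rw [Real.dist_eq, abs_sub_lt_iff]
  constructor
  · linarith only [hup', hε]
  · linarith only [hlo', hε]
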